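/- Let n be even, k ≥ 1, and suppose an oblivious program with time T ≤ k·n and space S on inputs x : Fin n → Fin (2n) computes MedianBit. Then for every even natural number N with 2 ≤ N ≤ n / C(4k², 2k) (C denoting the binomial coefficient), there exists a deterministic two-party protocol with at most 4k+1 messages, each of length at most S bits, in which Alice's input is a set x ⊆ {1,…,2N} of size N/2 and Bob's input is a set y ⊆ {1,…,2N} of size N/2, that for every pair of disjoint such sets (x, y) outputs the least significant bit of the (N/2)-th smallest element of x ∪ y. -/

import Mathlib

set_option linter.unusedSectionVars false
set_option linter.unusedVariables false
set_option maxHeartbeats 1600000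



/-- The least significant bit of the median (the `n/2`-th smallest) of the `n`
values `x i + 1`, each in `{1, …, 2n}`. -/
def medianBit (n : ℕ) (x : Fin n → Fin (2 * n)) : Bool :=
  decide ((((Finset.univ.image fun i => (x i : ℕ) + 1).sort (· ≤ ·)).getD (n / 2 - 1) 0) % 2 = 1)

/-- An oblivious program with time `T` and space `S` on inputs `x : Fin n → Fin (2n)`. -/
structure ObliviousProgram (n T S : ℕ) where
  Q : Type
  [fintypeQ : Fintype Q]
  card_le : Fintype.card Q ≤ 2 ^ S
  start : Q
  query : Fin T → Fin n
  step : Fin T → Q → Fin (2 * n) → Q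
  out : Q → Bool

/-- The output of an oblivious program on input `x`. -/
def ObliviousProgram.run {n T S : ℕ} (P : ObliviousProgram n T S)
    (x : Fin n → Fin (2 * n)) : Bool :=
  P.out ((List.finRange T).foldl (fun q i => P.step i q (x (P.query i))) P.start)

/-- The program computes `MedianBit` on all injective inputs. -/
def ObliviousProgram.ComputesMedianBit {n T S : ℕ} (P : ObliviousProgram n T S) : Prop :=
  ∀ x : Fin n → Fin (2 * n), Function.Injective x → P.run x = medianBit n x

/-- Sender of the `i`-th message (0-indexed) is Alice iff this is `true`. -/
def sendsAlice (aliceFirst : Bool) (i : ℕ) : Bool := aliceFirst = (i % 2 == 0)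

/-- A deterministic two-party protocol with `t` messages of lengths `m 0, …, m (t-1)`:
the `i`-th message is computed from the sender's input and the previous messages, players
strictly alternating; the output is computed by the receiver of the last message from its
input and the full transcript. -/
structure Protocol (X Y : Type) (t : ℕ) (m : Fin t → ℕ) (aliceFirst : Bool) where
  msgA : (i : Fin t) → X → ((j : Fin t) → j < i → Fin (2 ^ m j)) → Fin (2 ^ m i)
  msgB : (i : Fin t) → Y → ((j : Fin t) → j < i → Fin (2 ^ m j)) → Fin (2 ^ m i)
  outA : X → ((i : Fin t) → Fin (2 ^ m i)) → Bool
  outB : Y → ((i : Fin t) → Fin (2 ^ m i)) → Bool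

/-- The transcript of a protocol on inputs `x`, `y`. -/
def Protocol.transcript {X Y : Type} {t : ℕ} {m : Fin t → ℕ} {af : Bool}
    (P : Protocol X Y t m af) (x : X) (y : Y) (i : Fin t) : Fin (2 ^ m i) :=
  if sendsAlice af i.val then P.msgA i x (fun j hj => P.transcript x y j)
  else P.msgB i y (fun j hj => P.transcript x y j)
termination_by i.val
decreasing_by
  · exact hj
  · exact hj

/-- The output of the protocol, computed by the receiver of the last message. -/
def Protocol.run {X Y : Type} {t : ℕ} {m : Fin t → ℕ} {af : Bool}
    (P : Protocol X Y t m af) (x : X) (y : Y) : Bool :=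
  if sendsAlice af (t - 1) then P.outB y (P.transcript x y) else P.outA x (P.transcript x y)

/-- The least significant bit of the `N/2`-th smallest of the values `a + 1`, `a ∈ s`. -/
def lsbHalfKth (N : ℕ) (s : Finset (Fin (2 * N))) : Bool :=
  decide ((((s.sort (· ≤ ·)).map (fun a => (a : ℕ) + 1)).getD (N / 2 - 1) 0) % 2 = 1)

namespace OblAux

/-! ### Generic fold over an interval of naturals -/

def natFold {Q : Type*} (f : ℕ → Q → Q) : ℕ → ℕ → Q → Q
  | _, 0, st => st
  | a, len+1, st => natFold f (a+1) len (f a st)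

lemma natFold_add {Q : Type*} (f : ℕ → Q → Q) (l₁ : ℕ) :
    ∀ (l₂ a : ℕ) (st : Q),
      natFold f a (l₁ + l₂) st = natFold f (a + l₁) l₂ (natFold f a l₁ st) := by
  induction l₁ with
  | zero => intro l₂ a st; simp [natFold]
  | succ l ih =>
    intro l₂ a st
    have h1 : l + 1 + l₂ = (l + l₂) + 1 := by omega
    rw [h1]
    show natFold f (a+1) (l + l₂) (f a st) = _
    rw [ih]
    have h2 : a + 1 + l = a + (l + 1) := by omega
    rw [h2]
    rfl

lemma natFold_congr {Q : Type*} {f g : ℕ → Q → Q} (l : ℕ) :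
    ∀ (a : ℕ) (st : Q), (∀ i, a ≤ i → i < a + l → ∀ s, f i s = g i s) →
      natFold f a l st = natFold g a l st := by
  induction l with
  | zero => intro a st _; rfl
  | succ l ih =>
    intro a st h
    show natFold f (a+1) l (f a st) = natFold g (a+1) l (g a st)
    rw [h a le_rfl (by omega), ih (a+1) _ (fun i h1 h2 s => h i (by omega) (by omega) s)]

/-! ### Occurrence counts -/

variable {α : Type*} [DecidableEq α]

def cnt (q : ℕ → α) (a b : ℕ) (p : α) : ℕ :=
  ((Finset.Ico a b).filter (fun i => q i = p)).card

lemma cnt_le_left {q : ℕ → α} {a a' b : ℕ} (h : a ≤ a') (p : α) :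
    cnt q a' b p ≤ cnt q a b p :=
  Finset.card_le_card (Finset.filter_subset_filter _ (Finset.Ico_subset_Ico h le_rfl))

lemma cnt_le_right {q : ℕ → α} {a b b' : ℕ} (h : b' ≤ b) (p : α) :
    cnt q a b' p ≤ cnt q a b p :=
  Finset.card_le_card (Finset.filter_subset_filter _ (Finset.Ico_subset_Ico le_rfl h))

lemma cnt_split {q : ℕ → α} {a t b : ℕ} (h1 : a ≤ t) (h2 : t ≤ b) (p : α) :
    cnt q a b p = cnt q a t p + cnt q t b p := by
  unfold cnt
  rw [← Finset.Ico_union_Ico_eq_Ico h1 h2, Finset.filter_union,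
    Finset.card_union_of_disjoint]
  exact Finset.disjoint_filter_filter (Finset.Ico_disjoint_Ico_consecutive a t b)

lemma cnt_eq_zero_iff {q : ℕ → α} {a b : ℕ} {p : α} :
    cnt q a b p = 0 ↔ ∀ i, a ≤ i → i < b → q i ≠ p := by
  unfold cnt
  rw [Finset.card_eq_zero, Finset.filter_eq_empty_iff]
  constructor
  · intro h i h1 h2; exact h (Finset.mem_Ico.2 ⟨h1, h2⟩)
  · intro h i hi; exact h i (Finset.mem_Ico.1 hi).1 (Finset.mem_Ico.1 hi).2

/-! ### Alternating avoidance structure (intervals indexed from the right end) -/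

def Alt (q : ℕ → α) (a b : ℕ) (A B : Finset α) (r : ℕ) (par : Bool) : Prop :=
  ∃ c : ℕ → ℕ, c 0 = b ∧ (∀ ℓ, c (ℓ+1) ≤ c ℓ) ∧ (∀ ℓ, r ≤ ℓ → c ℓ = a) ∧
    ∀ ℓ i, c (ℓ+1) ≤ i → i < c ℓ → q i ∉ (if ((ℓ % 2 == 0) == par) then A else B)

lemma alt_mono {q : ℕ → α} {a b : ℕ} {A B A' B' : Finset α} {r : ℕ} {par : Bool}
    (hA : A' ⊆ A) (hB : B' ⊆ B) (h : Alt q a b A B r par) : Alt q a b A' B' r par := by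
  obtain ⟨c, h0, h1, h2, h3⟩ := h
  refine ⟨c, h0, h1, h2, fun ℓ i hi1 hi2 => ?_⟩
  have := h3 ℓ i hi1 hi2
  cases hp : ((ℓ % 2 == 0) == par) with
  | false => simp only [hp, Bool.false_eq_true, if_false] at this ⊢
             exact fun hc => this (hB hc)
  | true => simp only [hp, if_true] at this ⊢
            exact fun hc => this (hA hc)

lemma alt_swap {q : ℕ → α} {a b : ℕ} {A B : Finset α} {r : ℕ} {par : Bool}
    (h : Alt q a b A B r par) : Alt q a b B A r (!par) := by
  obtain ⟨c, h0, h1, h2, h3⟩ := h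
  refine ⟨c, h0, h1, h2, fun ℓ i hi1 hi2 => ?_⟩
  have := h3 ℓ i hi1 hi2
  cases hp : (ℓ % 2 == 0) <;> cases par <;> simp [hp] at this ⊢ <;> exact this

lemma alt_one {q : ℕ → α} {a b : ℕ} {A B : Finset α} (par : Bool) (hab : a ≤ b)
    (h : ∀ i, a ≤ i → i < b → q i ∉ (if par then A else B)) : Alt q a b A B 1 par := by
  refine ⟨fun ℓ => if ℓ = 0 then b else a, by simp, ?_, ?_, ?_⟩
  · intro ℓ; cases ℓ with
    | zero => simpa using hab
    | succ m => simp
  · intro ℓ hl; dsimp only; rw [if_neg]; omega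
  · intro ℓ i hi1 hi2
    cases ℓ with
    | zero =>
      dsimp only at hi1 hi2
      simp only [if_neg Nat.one_ne_zero, if_pos rfl] at hi1 hi2
      have := h i hi1 hi2
      cases par <;> simpa using this
    | succ m =>
      dsimp only at hi1 hi2
      rw [if_neg (by omega)] at hi2
      rw [if_neg (by omega)] at hi1
      omega


/-! ### Dead symbols -/

def deadIn (q : ℕ → α) (b : ℕ) (X : Finset α) (t : ℕ) : Finset α :=
  X.filter (fun p => cnt q t b p = 0)

lemma deadIn_subset {q : ℕ → α} {b : ℕ} {X : Finset α} {t : ℕ} :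
    deadIn q b X t ⊆ X := Finset.filter_subset _ _

lemma deadIn_full {q : ℕ → α} {b : ℕ} {X : Finset α} {t : ℕ} (h : b ≤ t) :
    deadIn q b X t = X := by
  unfold deadIn
  rw [Finset.filter_eq_self]
  intro p _
  unfold cnt
  rw [Finset.card_eq_zero, Finset.Ico_eq_empty (by omega), Finset.filter_empty]

lemma deadIn_succ {q : ℕ → α} {b : ℕ} {X : Finset α} {t : ℕ} :
    deadIn q b X (t+1) ⊆ deadIn q b X t ∪ {q t} := by
  intro p hp
  rw [Finset.mem_union, Finset.mem_singleton]
  obtain ⟨hpX, hc⟩ := Finset.mem_filter.1 hp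
  by_cases hqt : q t = p
  · exact Or.inr hqt.symm
  · refine Or.inl (Finset.mem_filter.2 ⟨hpX, ?_⟩)
    rw [cnt_eq_zero_iff] at hc ⊢
    intro i h1 h2
    rcases Nat.eq_or_lt_of_le h1 with h | h
    · rw [← h]; exact hqt
    · exact hc i h h2

lemma deadIn_no_occ {q : ℕ → α} {b : ℕ} {X : Finset α} {t : ℕ} {p : α}
    (hp : p ∈ deadIn q b X t) : ∀ i, t ≤ i → i < b → q i ≠ p := by
  have := (Finset.mem_filter.1 hp).2
  rwa [cnt_eq_zero_iff] at this

/-! ### The cut step -/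

lemma lem3_cut (q : ℕ → α) (jX jY M a b : ℕ) (A B : Finset α)
    (hjX : 1 ≤ jX) (hjY : 1 ≤ jY) (hab : a ≤ b)
    (hd : Disjoint A B)
    (hcntA : ∀ p ∈ A, cnt q a b p ≤ jX) (hcntB : ∀ p ∈ B, cnt q a b p ≤ jY)
    (hcardA : M * 2^(jX + jY - 1) ≤ A.card) (hcardB : M * 2^(jX + jY - 1) ≤ B.card)
    (t : ℕ) (hta : a ≤ t) (htb : t ≤ b)
    (hdeadA : (A.card + 1)/2 ≤ (deadIn q b A t).card)
    (hdeadB : (deadIn q b B t).card < (B.card + 1)/2)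
    (REC : ∀ (A' B' : Finset α), Disjoint A' B' →
      (∀ p ∈ A', cnt q a t p ≤ jX) → (∀ p ∈ B', cnt q a t p ≤ jY - 1) →
      M * 2^(jX + (jY-1) - 1) ≤ A'.card → M * 2^(jX + (jY-1) - 1) ≤ B'.card →
      ∃ A'' B'' r par, A'' ⊆ A' ∧ B'' ⊆ B' ∧ M ≤ A''.card ∧ M ≤ B''.card ∧
        1 ≤ r ∧ r ≤ max (jX + (jY-1)) 1 ∧ Alt q a t A'' B'' r par) :
    ∃ A'' B'' r, A'' ⊆ A ∧ B'' ⊆ B ∧ M ≤ A''.card ∧ M ≤ B''.card ∧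
      1 ≤ r ∧ r ≤ jX + jY ∧ Alt q a b A'' B'' r true := by
  set A₂ := deadIn q b A t with hA₂def
  set B₂ := B \ deadIn q b B t with hB₂def
  have hE2 : jX + jY - 1 = (jX + jY - 2) + 1 := by omega
  have hpow : M * 2^(jX + jY - 1) = (M * 2^(jX + jY - 2)) * 2 := by
    rw [hE2, pow_succ]; ring
  rw [hpow] at hcardA hcardB
  have hA₂card : M * 2^(jX + jY - 2) ≤ A₂.card := by
    have h2 : M * 2^(jX + jY - 2) ≤ (A.card + 1)/2 := by omega
    exact le_trans h2 hdeadA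
  have hB₂card : M * 2^(jX + jY - 2) ≤ B₂.card := by
    have hsub : deadIn q b B t ⊆ B := deadIn_subset
    have hcs := Finset.card_sdiff_of_subset hsub
    rw [← hB₂def] at hcs
    omega
  have hexp : jX + (jY - 1) - 1 = jX + jY - 2 := by omega
  have hcntA₂ : ∀ p ∈ A₂, cnt q a t p ≤ jX := by
    intro p hp
    exact le_trans (cnt_le_right htb p) (hcntA p (deadIn_subset hp))
  have hcntB₂ : ∀ p ∈ B₂, cnt q a t p ≤ jY - 1 := by
    intro p hp
    obtain ⟨hpB, hpnd⟩ := Finset.mem_sdiff.1 hp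
    have hlive : cnt q t b p ≠ 0 := by
      intro h0
      exact hpnd (Finset.mem_filter.2 ⟨hpB, h0⟩)
    have hspl := cnt_split (q := q) hta htb p
    have h := hcntB p hpB
    omega
  have hdisj₂ : Disjoint A₂ B₂ :=
    Finset.disjoint_of_subset_left deadIn_subset
      (Finset.disjoint_of_subset_right Finset.sdiff_subset hd)
  obtain ⟨A'', B'', r', par', hsubA, hsubB, hcA'', hcB'', hr1, hrle, halt⟩ :=
    REC A₂ B₂ hdisj₂ hcntA₂ hcntB₂ (by rw [hexp]; exact hA₂card) (by rw [hexp]; exact hB₂card)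
  have hrle' : r' ≤ jX + jY - 1 := by
    have hmx : max (jX + (jY-1)) 1 = jX + jY - 1 := by
      rw [Nat.max_eq_left (by omega)]; omega
    omega
  have hdeadA'' : ∀ p ∈ A'', ∀ i, t ≤ i → i < b → q i ≠ p := by
    intro p hp
    exact deadIn_no_occ (hsubA hp)
  obtain ⟨c', hc0, hanti, hcap, havoid⟩ := halt
  cases par' with
  | true =>
    refine ⟨A'', B'', r', subset_trans hsubA deadIn_subset,
      subset_trans hsubB Finset.sdiff_subset, hcA'', hcB'', hr1, by omega, ?_⟩
    refine ⟨fun ℓ => if ℓ = 0 then b else c' ℓ, by simp, ?_, ?_, ?_⟩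
    · intro ℓ
      cases ℓ with
      | zero =>
        dsimp only
        rw [if_neg Nat.one_ne_zero, if_pos rfl]
        exact le_trans (le_trans (hanti 0) (le_of_eq hc0)) htb
      | succ m =>
        dsimp only
        rw [if_neg (by omega), if_neg (by omega)]
        exact hanti (m+1)
    · intro ℓ hl
      dsimp only
      rw [if_neg (by omega)]
      exact hcap ℓ hl
    · intro ℓ i h1 h2
      cases ℓ with
      | zero =>
        dsimp only at h1 h2
        rw [if_neg Nat.one_ne_zero] at h1
        rw [if_pos rfl] at h2
        by_cases hit : i < c' 0
        · have := havoid 0 i h1 hit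
          simpa using this
        · simp only [show ((0 % 2 == 0) == true) = true by rfl, if_true]
          rw [hc0] at hit
          exact fun hmem => hdeadA'' _ hmem i (by omega) h2 rfl
      | succ m =>
        dsimp only at h1 h2
        rw [if_neg (by omega)] at h1
        rw [if_neg (by omega)] at h2
        exact havoid (m+1) i h1 h2
  | false =>
    refine ⟨A'', B'', r' + 1, subset_trans hsubA deadIn_subset,
      subset_trans hsubB Finset.sdiff_subset, hcA'', hcB'', by omega, by omega, ?_⟩
    refine ⟨fun ℓ => if ℓ = 0 then b else c' (ℓ-1), by simp, ?_, ?_, ?_⟩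
    · intro ℓ
      cases ℓ with
      | zero =>
        dsimp only
        rw [if_neg Nat.one_ne_zero, if_pos rfl]
        simpa [hc0] using htb
      | succ m =>
        dsimp only
        rw [if_neg (by omega), if_neg (by omega)]
        simpa using hanti m
    · intro ℓ hl
      dsimp only
      rw [if_neg (by omega)]
      exact hcap (ℓ - 1) (by omega)
    · intro ℓ i h1 h2
      cases ℓ with
      | zero =>
        dsimp only at h1 h2
        rw [if_neg Nat.one_ne_zero] at h1
        rw [if_pos rfl] at h2
        simp only [show ((0 % 2 == 0) == true) = true by rfl, if_true]
        simp only [hc0] at h1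
        exact fun hmem => hdeadA'' _ hmem i h1 h2 rfl
      | succ m =>
        dsimp only at h1 h2
        rw [if_neg (by omega)] at h1
        rw [if_neg (by omega)] at h2
        simp only [Nat.add_sub_cancel] at h1 h2
        have := havoid m i h1 h2
        rcases Nat.mod_two_eq_zero_or_one m with hm | hm
        · have hm1 : (m+1) % 2 = 1 := by omega
          simpa [hm, hm1] using this
        · have hm1 : (m+1) % 2 = 0 := by omega
          simpa [hm, hm1] using this

lemma alt_one_true {q : ℕ → α} {a b : ℕ} {A B : Finset α} (hab : a ≤ b)
    (h : ∀ i, a ≤ i → i < b → q i ∉ A) : Alt q a b A B 1 true :=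
  alt_one true hab (by intro i h1 h2; simpa using h i h1 h2)

lemma alt_one_false {q : ℕ → α} {a b : ℕ} {A B : Finset α} (hab : a ≤ b)
    (h : ∀ i, a ≤ i → i < b → q i ∉ B) : Alt q a b A B 1 false :=
  alt_one false hab (by intro i h1 h2; simpa using h i h1 h2)

lemma exists_hit (q : ℕ → α) (b : ℕ) (X : Finset α) (a : ℕ) (hab : a ≤ b) (thr : ℕ)
    (hthr : thr ≤ X.card) :
    ∃ t, a ≤ t ∧ t ≤ b ∧ thr ≤ (deadIn q b X t).card ∧
      ∀ u, a ≤ u → u < t → (deadIn q b X u).card < thr := by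
  have hne : ((Finset.Icc a b).filter (fun t => thr ≤ (deadIn q b X t).card)).Nonempty := by
    refine ⟨b, Finset.mem_filter.2 ⟨Finset.mem_Icc.2 ⟨hab, le_refl _⟩, ?_⟩⟩
    rw [deadIn_full (le_refl _)]
    exact hthr
  obtain ⟨t, ht⟩ := hne
  -- take min'
  refine ⟨((Finset.Icc a b).filter (fun t => thr ≤ (deadIn q b X t).card)).min' ⟨t, ht⟩,
    ?_, ?_, ?_, ?_⟩
  · have := Finset.min'_mem _ (⟨t, ht⟩ :
      ((Finset.Icc a b).filter (fun t => thr ≤ (deadIn q b X t).card)).Nonempty)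
    rw [Finset.mem_filter, Finset.mem_Icc] at this
    exact this.1.1
  · have := Finset.min'_mem _ (⟨t, ht⟩ :
      ((Finset.Icc a b).filter (fun t => thr ≤ (deadIn q b X t).card)).Nonempty)
    rw [Finset.mem_filter, Finset.mem_Icc] at this
    exact this.1.2
  · have := Finset.min'_mem _ (⟨t, ht⟩ :
      ((Finset.Icc a b).filter (fun t => thr ≤ (deadIn q b X t).card)).Nonempty)
    rw [Finset.mem_filter, Finset.mem_Icc] at this
    exact this.2
  · intro u hu1 hu2
    by_contra hcon
    push_neg at hcon
    have humem : u ∈ (Finset.Icc a b).filter (fun t => thr ≤ (deadIn q b X t).card) := by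
      refine Finset.mem_filter.2 ⟨Finset.mem_Icc.2 ⟨hu1, ?_⟩, hcon⟩
      have := Finset.min'_mem _ (⟨t, ht⟩ :
        ((Finset.Icc a b).filter (fun t => thr ≤ (deadIn q b X t).card)).Nonempty)
      rw [Finset.mem_filter, Finset.mem_Icc] at this
      omega
    have := Finset.min'_le _ _ humem
    omega

/-! ### The main recursive lemma -/

lemma lem3_core (q : ℕ → α) : ∀ (J jX jY M a b : ℕ) (A B : Finset α),
    jX + jY ≤ J → 1 ≤ M → a ≤ b → Disjoint A B →
    (∀ p ∈ A, cnt q a b p ≤ jX) → (∀ p ∈ B, cnt q a b p ≤ jY) →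
    M * 2^(jX + jY - 1) ≤ A.card → M * 2^(jX + jY - 1) ≤ B.card →
    ∃ A' B' r par, A' ⊆ A ∧ B' ⊆ B ∧ M ≤ A'.card ∧ M ≤ B'.card ∧
      1 ≤ r ∧ r ≤ max (jX + jY) 1 ∧ Alt q a b A' B' r par := by
  intro J
  induction J with
  | zero =>
    intro jX jY M a b A B hJ hM hab hd hcA hcB hA hB
    have hX0 : jX = 0 := by omega
    have hY0 : jY = 0 := by omega
    subst hX0; subst hY0
    refine ⟨A, B, 1, true, le_refl _, le_refl _, by simpa using hA, by simpa using hB,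
      le_refl _, by omega, ?_⟩
    refine alt_one_true hab ?_
    intro i h1 h2
    intro hmem
    have := hcA _ hmem
    rw [Nat.le_zero, cnt_eq_zero_iff] at this
    exact this i h1 h2 rfl
  | succ J ih =>
    intro jX jY M a b A B hJ hM hab hd hcA hcB hA hB
    have hMle : M ≤ M * 2^(jX + jY - 1) :=
      Nat.le_mul_of_pos_right M (Nat.pow_pos (by omega))
    by_cases hX0 : jX = 0
    · subst hX0
      refine ⟨A, B, 1, true, le_refl _, le_refl _, by omega, by omega, le_refl _, by omega, ?_⟩
      refine alt_one_true hab ?_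
      intro i h1 h2 hmem
      have := hcA _ hmem
      rw [Nat.le_zero, cnt_eq_zero_iff] at this
      exact this i h1 h2 rfl
    by_cases hY0 : jY = 0
    · subst hY0
      refine ⟨A, B, 1, false, le_refl _, le_refl _, by omega, by omega, le_refl _, by omega, ?_⟩
      refine alt_one_false hab ?_
      intro i h1 h2 hmem
      have := hcB _ hmem
      rw [Nat.le_zero, cnt_eq_zero_iff] at this
      exact this i h1 h2 rfl
    -- both jX, jY ≥ 1
    have hjX : 1 ≤ jX := by omega
    have hjY : 1 ≤ jY := by omega
    obtain ⟨tA, htAa, htAb, htAdead, htAmin⟩ :=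
      exists_hit q b A a hab ((A.card + 1)/2) (by omega)
    obtain ⟨tB, htBa, htBb, htBdead, htBmin⟩ :=
      exists_hit q b B a hab ((B.card + 1)/2) (by omega)
    rcases lt_trichotomy tA tB with hlt | heq | hgt
    · -- cut at tA, A dead side, B live side
      have hdeadB : (deadIn q b B tA).card < (B.card + 1)/2 := htBmin tA htAa hlt
      obtain ⟨A'', B'', r, hs1, hs2, hc1, hc2, hr1, hrle, halt⟩ :=
        lem3_cut q jX jY M a b A B hjX hjY hab hd hcA hcB hA hB tA htAa htAb htAdead hdeadB
          (fun A' B' hd' hcA' hcB' hA' hB' =>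
            ih jX (jY - 1) M a tA A' B' (by omega) hM htAa hd' hcA' hcB' hA' hB')
      exact ⟨A'', B'', r, true, hs1, hs2, hc1, hc2, hr1, by omega, halt⟩
    · -- tA = tB : both reach their thresholds at the same time; show tA = a
      subst heq
      have htAeq : tA = a := by
        by_contra hne
        have hgt : a < tA := by omega
        have h1 : (deadIn q b A (tA - 1)).card < (A.card + 1)/2 :=
          htAmin (tA - 1) (by omega) (by omega)
        have h2 : (deadIn q b B (tA - 1)).card < (B.card + 1)/2 :=
          htBmin (tA - 1) (by omega) (by omega)
        have hstepA : deadIn q b A tA ⊆ deadIn q b A (tA - 1) ∪ {q (tA - 1)} := by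
          have h := deadIn_succ (q := q) (b := b) (X := A) (t := tA - 1)
          rwa [show tA - 1 + 1 = tA by omega] at h
        have hstepB : deadIn q b B tA ⊆ deadIn q b B (tA - 1) ∪ {q (tA - 1)} := by
          have h := deadIn_succ (q := q) (b := b) (X := B) (t := tA - 1)
          rwa [show tA - 1 + 1 = tA by omega] at h
        have hqA : q (tA - 1) ∈ A := by
          by_contra hq
          have hsub : deadIn q b A tA ⊆ deadIn q b A (tA - 1) := by
            intro p hp
            rcases Finset.mem_union.1 (hstepA hp) with h | h
            · exact h
            · exact absurd (Finset.mem_singleton.1 h ▸ deadIn_subset hp) hq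
          have := Finset.card_le_card hsub
          omega
        have hqB : q (tA - 1) ∈ B := by
          by_contra hq
          have hsub : deadIn q b B tA ⊆ deadIn q b B (tA - 1) := by
            intro p hp
            rcases Finset.mem_union.1 (hstepB hp) with h | h
            · exact h
            · exact absurd (Finset.mem_singleton.1 h ▸ deadIn_subset hp) hq
          have := Finset.card_le_card hsub
          omega
        exact Finset.disjoint_left.1 hd hqA hqB
      -- both dead at a
      rw [htAeq] at htAdead htBdead
      have hpow : M * 2^(jX + jY - 1) = (M * 2^(jX + jY - 2)) * 2 := by
        rw [show jX + jY - 1 = (jX + jY - 2) + 1 by omega, pow_succ]; ring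
      have hone : 1 ≤ 2^(jX + jY - 2) := Nat.one_le_two_pow
      have hMle2 : M ≤ M * 2^(jX + jY - 2) := Nat.le_mul_of_pos_right M (by omega)
      rw [hpow] at hA hB
      refine ⟨deadIn q b A a, deadIn q b B a, 1, true, deadIn_subset, deadIn_subset,
        by omega, by omega, le_refl _, by omega, ?_⟩
      refine alt_one_true hab ?_
      intro i h1 h2 hmem
      exact deadIn_no_occ hmem i h1 h2 rfl
    · -- tB < tA : symmetric, swap roles
      have hdeadA : (deadIn q b A tB).card < (A.card + 1)/2 := htAmin tB htBa hgt
      obtain ⟨B'', A'', r, hs1, hs2, hc1, hc2, hr1, hrle, halt⟩ :=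
        lem3_cut q jY jX M a b B A hjY hjX hab hd.symm hcB hcA
          (by rw [Nat.add_comm]; exact hB) (by rw [Nat.add_comm]; exact hA)
          tB htBa htBb htBdead hdeadA
          (fun B' A' hd' hcB' hcA' hB' hA' =>
            ih jY (jX - 1) M a tB B' A' (by omega) hM htBa hd' hcB' hcA' hB' hA')
      exact ⟨A'', B'', r, false, hs2, hs1, hc2, hc1, hr1, by omega, by simpa using alt_swap halt⟩

/-! ### Binomial lower bound -/

lemma choose_lower (k : ℕ) (hk : 1 ≤ k) : 2^(4*k-2) ≤ Nat.choose (4*k^2) (2*k) := by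
  by_cases h3 : k < 3
  · interval_cases k
    · decide
    · decide
  push_neg at h3
  have h1 : (4*k^2 + 1 - 2*k)^(2*k) ≤ Nat.descFactorial (4*k^2) (2*k) :=
    Nat.pow_sub_le_descFactorial _ _
  have h2 : Nat.descFactorial (4*k^2) (2*k) =
      Nat.factorial (2*k) * Nat.choose (4*k^2) (2*k) :=
    Nat.descFactorial_eq_factorial_mul_choose _ _
  have h4 : (8*k)^(2*k) ≤ (4*k^2 + 1 - 2*k)^(2*k) := by
    apply Nat.pow_le_pow_left
    have hsq : 10*k ≤ 4*k^2 := by nlinarith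
    omega
  have h5 : 2^(4*k-2) * Nat.factorial (2*k) ≤ (8*k)^(2*k) := by
    have hf : Nat.factorial (2*k) ≤ (2*k)^(2*k) := Nat.factorial_le_pow _
    have heq : (8*k)^(2*k) = 2^(4*k) * (2*k)^(2*k) := by
      rw [show 8*k = 2^2 * (2*k) by ring, mul_pow, ← pow_mul, show 2*(2*k) = 4*k by ring]
    rw [heq]
    calc 2^(4*k-2) * Nat.factorial (2*k) ≤ 2^(4*k) * Nat.factorial (2*k) :=
          Nat.mul_le_mul_right _ (Nat.pow_le_pow_right (by omega) (by omega))
      _ ≤ 2^(4*k) * (2*k)^(2*k) := Nat.mul_le_mul_left _ hf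
  have h6 : 2^(4*k-2) * Nat.factorial (2*k) ≤
      Nat.factorial (2*k) * Nat.choose (4*k^2) (2*k) := by
    rw [← h2]
    exact le_trans h5 (le_trans h4 h1)
  rw [mul_comm] at h6
  exact Nat.le_of_mul_le_mul_left h6 (Nat.factorial_pos _)

/-! ### Phase 1: from a query sequence to two position sets and a breakpoint structure -/

lemma phase1 {n : ℕ} (q : ℕ → Fin n) (k T N : ℕ) (hk : 1 ≤ k) (hT : T ≤ k * n)
    (hN2 : 2 ≤ N) (hNeven : Even N)
    (hCn : N * Nat.choose (4 * k ^ 2) (2 * k) ≤ n) :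
    ∃ (PA PB : Finset (Fin n)) (c : ℕ → ℕ), Disjoint PA PB ∧ PA.card = N / 2 ∧
      PB.card = N / 2 ∧ c 0 = 0 ∧ c (4*k+1) = T ∧ (∀ ℓ, c ℓ ≤ c (ℓ+1)) ∧
      ∀ ℓ i, ℓ < 4*k+1 → c ℓ ≤ i → i < c (ℓ+1) →
        q i ∉ (if ℓ % 2 = 0 then PB else PA) := by
  obtain ⟨halfN, hhalfN⟩ := hNeven
  have hNdiv : N / 2 = halfN := by omega
  -- the good symbols
  set good := Finset.univ.filter (fun p : Fin n => cnt q 0 T p ≤ 2*k-1) with hgooddef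
  have htotal : ∑ p ∈ (Finset.univ : Finset (Fin n)), cnt q 0 T p = T := by
    have := Finset.card_eq_sum_card_fiberwise
      (f := q) (s := Finset.Ico 0 T) (t := Finset.univ) (fun x _ => Finset.mem_univ _)
    rw [Nat.card_Ico] at this
    simpa [cnt] using this.symm
  set bad := Finset.univ.filter (fun p : Fin n => ¬ (cnt q 0 T p ≤ 2*k-1)) with hbaddef
  have hgb : good.card + bad.card = n := by
    rw [hgooddef, hbaddef, Finset.card_filter_add_card_filter_not]
    simp
  have hbadsum : bad.card * (2*k) ≤ T := by
    calc bad.card * (2*k) = ∑ _p ∈ bad, (2*k) := by rw [Finset.sum_const, smul_eq_mul]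
      _ ≤ ∑ p ∈ bad, cnt q 0 T p := by
          apply Finset.sum_le_sum
          intro p hp
          have := (Finset.mem_filter.1 hp).2
          omega
      _ ≤ ∑ p ∈ (Finset.univ : Finset (Fin n)), cnt q 0 T p :=
          Finset.sum_le_sum_of_subset (Finset.filter_subset _ _)
      _ = T := htotal
  have hbad2 : 2 * bad.card ≤ n := by
    have h1 : (2 * bad.card) * k ≤ n * k := by
      calc (2*bad.card)*k = bad.card * (2*k) := by ring
        _ ≤ T := hbadsum
        _ ≤ k*n := hT
        _ = n*k := by ring
    exact Nat.le_of_mul_le_mul_right h1 (by omega)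
  -- numeric bound
  have hCpow : 2^(4*k-2) ≤ Nat.choose (4*k^2) (2*k) := choose_lower k hk
  have hnX : N * 2^(4*k-2) ≤ n :=
    le_trans (Nat.mul_le_mul_left _ hCpow) hCn
  have hpow43 : N * 2^(4*k-2) = 2 * (2 * (halfN * 2^(4*k-3))) := by
    rw [show 4*k-2 = (4*k-3)+1 by omega, pow_succ]
    rw [hhalfN]; ring
  have hgoodcard : 2 * (halfN * 2^(4*k-3)) ≤ good.card := by
    rw [hpow43] at hnX
    omega
  -- split the good symbols
  obtain ⟨A₀, hA₀sub, hA₀card⟩ := Finset.exists_subset_card_eq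
    (s := good) (n := halfN * 2^(4*k-3)) (by omega)
  set B₀ := good \ A₀ with hB₀def
  have hB₀card : halfN * 2^(4*k-3) ≤ B₀.card := by
    rw [hB₀def, Finset.card_sdiff_of_subset hA₀sub]
    omega
  have hcntgood : ∀ p ∈ good, cnt q 0 T p ≤ 2*k-1 := fun p hp => (Finset.mem_filter.1 hp).2
  have hexp : (2*k-1) + (2*k-1) - 1 = 4*k-3 := by omega
  obtain ⟨A', B', r, par, hsubA, hsubB, hcA', hcB', hr1, hrle, halt⟩ :=
    lem3_core q (4*k-2) (2*k-1) (2*k-1) halfN 0 T A₀ B₀ (by omega) (by omega) (by omega)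
      (Finset.disjoint_sdiff)
      (fun p hp => hcntgood p (hA₀sub hp))
      (fun p hp => hcntgood p (Finset.sdiff_subset hp))
      (by rw [hexp, hA₀card])
      (by rw [hexp]; exact hB₀card)
  have hrle' : r ≤ 4*k-2 := by
    have : max ((2*k-1) + (2*k-1)) 1 = 4*k-2 := by
      rw [Nat.max_eq_left (by omega)]; omega
    omega
  -- trim
  obtain ⟨U, hUsub, hUcard⟩ := Finset.exists_subset_card_eq (s := A') (n := halfN) hcA'
  obtain ⟨V, hVsub, hVcard⟩ := Finset.exists_subset_card_eq (s := B') (n := halfN) hcB'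
  obtain ⟨c', hc0, hanti, hcap, havoid⟩ := halt
  have hdisjUV : Disjoint U V := by
    apply Finset.disjoint_of_subset_left (subset_trans hUsub hsubA)
    apply Finset.disjoint_of_subset_right (subset_trans hVsub hsubB)
    exact Finset.disjoint_sdiff
  refine ⟨(if par then V else U), (if par then U else V), fun ℓ => c' (4*k+1 - ℓ),
    ?_, ?_, ?_, ?_, ?_, ?_, ?_⟩
  · cases par
    · simpa using hdisjUV
    · simpa using hdisjUV.symm
  · cases par <;> simp [hUcard, hVcard, hNdiv]
  · cases par <;> simp [hUcard, hVcard, hNdiv]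
  · exact hcap _ (by omega)
  · simpa using hc0
  · intro ℓ
    dsimp only
    by_cases hℓ : ℓ < 4*k+1
    · rw [show 4*k+1-ℓ = (4*k-ℓ)+1 by omega, show 4*k+1-(ℓ+1) = 4*k-ℓ by omega]
      exact hanti _
    · rw [show 4*k+1-ℓ = 0 by omega, show 4*k+1-(ℓ+1) = 0 by omega]
  · intro ℓ i hℓ h1 h2
    dsimp only at h1 h2
    rw [show 4*k+1-ℓ = (4*k-ℓ)+1 by omega] at h1
    rw [show 4*k+1-(ℓ+1) = 4*k-ℓ by omega] at h2
    have hthis := havoid (4*k-ℓ) i h1 h2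
    rcases Nat.mod_two_eq_zero_or_one ℓ with he | he
    · rw [if_pos he]
      have hj : (4*k-ℓ) % 2 = 0 := by omega
      rw [hj] at hthis
      cases par
      · simp only [show ((0 % 2 == 0) == false) = false by rfl, Bool.false_eq_true,
          if_false] at hthis
        simp only [Bool.false_eq_true, if_false]
        exact fun hmem => hthis (hVsub hmem)
      · simp only [show ((0 % 2 == 0) == true) = true by rfl, if_true] at hthis
        simp only [if_pos rfl]
        exact fun hmem => hthis (hUsub hmem)
    · rw [if_neg (by omega)]
      have hj : (4*k-ℓ) % 2 = 1 := by omega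
      rw [hj] at hthis
      cases par
      · simp only [show ((1 % 2 == 0) == false) = true by rfl, if_true] at hthis
        simp only [Bool.false_eq_true, if_false]
        exact fun hmem => hthis (hUsub hmem)
      · simp only [show ((1 % 2 == 0) == true) = false by rfl, Bool.false_eq_true,
          if_false] at hthis
        simp only [if_pos rfl]
        exact fun hmem => hthis (hVsub hmem)

/-! ### Sorted list indexing helpers -/

section SortHelpers

variable {β : Type*} [LinearOrder β] [DecidableEq β]

lemma sort_indexOf_lt {s : Finset β} {p : β} (hp : p ∈ s) :
    (s.sort (· ≤ ·)).idxOf p < s.card := by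
  rw [← Finset.length_sort (α := β) (· ≤ ·) (s := s)]
  exact List.idxOf_lt_length_iff.2 ((Finset.mem_sort _).2 hp)

lemma sort_getD_indexOf {s : Finset β} {p : β} (hp : p ∈ s) (d : β) :
    (s.sort (· ≤ ·)).getD ((s.sort (· ≤ ·)).idxOf p) d = p := by
  rw [List.getD_eq_getElem _ _ (by
    rw [Finset.length_sort]
    exact sort_indexOf_lt hp)]
  exact List.getElem_idxOf _

lemma sort_getD_mem {s : Finset β} {j : ℕ} (hj : j < s.card) (d : β) :
    (s.sort (· ≤ ·)).getD j d ∈ s := by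
  rw [List.getD_eq_getElem _ _ (by rwa [Finset.length_sort])]
  exact (Finset.mem_sort _).1 (List.getElem_mem _)

lemma sort_indexOf_getD {s : Finset β} {j : ℕ} (hj : j < s.card) (d : β) :
    (s.sort (· ≤ ·)).idxOf ((s.sort (· ≤ ·)).getD j d) = j := by
  have hlen : j < (s.sort (· ≤ ·)).length := by rwa [Finset.length_sort]
  rw [List.getD_eq_getElem _ _ hlen]
  have hnd := Finset.sort_nodup s (· ≤ ·)
  have hmem : (s.sort (· ≤ ·))[j] ∈ s.sort (· ≤ ·) := List.getElem_mem _
  have hidx : (s.sort (· ≤ ·)).idxOf ((s.sort (· ≤ ·))[j]) < (s.sort (· ≤ ·)).length :=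
    List.idxOf_lt_length_iff.2 hmem
  have := List.getElem_idxOf (xs := s.sort (· ≤ ·)) (x := (s.sort (· ≤ ·))[j]) hidx
  have hinj := List.nodup_iff_injective_get.1 hnd
  have := hinj (a₁ := ⟨_, hidx⟩) (a₂ := ⟨j, hlen⟩) (by simpa [List.get_eq_getElem] using this)
  simpa using congrArg Fin.val this

lemma sort_getD_inj {s : Finset β} {j₁ j₂ : ℕ} (h1 : j₁ < s.card) (h2 : j₂ < s.card) (d : β)
    (h : (s.sort (· ≤ ·)).getD j₁ d = (s.sort (· ≤ ·)).getD j₂ d) : j₁ = j₂ := by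
  have e1 := sort_indexOf_getD (s := s) h1 d
  have e2 := sort_indexOf_getD (s := s) h2 d
  rw [h] at e1
  rw [e2] at e1
  exact e1.symm

lemma sort_indexOf_inj {s : Finset β} {p₁ p₂ : β} (h1 : p₁ ∈ s) (h2 : p₂ ∈ s)
    (h : (s.sort (· ≤ ·)).idxOf p₁ = (s.sort (· ≤ ·)).idxOf p₂) : p₁ = p₂ := by
  have e1 := sort_getD_indexOf h1 p₁
  have e2 := sort_getD_indexOf h2 p₁
  rw [← e1, ← e2, h]

end SortHelpers

/-! ### The encoded input -/

def bandVal (n N : ℕ) (z : Finset (Fin (2*N))) (j : ℕ) : ℕ :=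
  ((z.sort (· ≤ ·)).map Fin.val).getD j 0 + (n - N)

def padVal (n N : ℕ) (j : ℕ) : ℕ :=
  if j < (n-N)/2 then j else if j < n-N then n + N + (j - (n-N)/2) else 0

def encInNat (n N : ℕ) (PA PB : Finset (Fin n)) (x y : Finset (Fin (2*N))) (p : Fin n) : ℕ :=
  if p ∈ PA then bandVal n N x ((PA.sort (· ≤ ·)).idxOf p)
  else if p ∈ PB then bandVal n N y ((PB.sort (· ≤ ·)).idxOf p)
  else padVal n N ((((Finset.univ \ PA) \ PB).sort (· ≤ ·)).idxOf p)

lemma bandVal_in_range {n N : ℕ} (hN : 0 < N) (hNn : N ≤ n) (z : Finset (Fin (2*N))) (j : ℕ) :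
    n - N ≤ bandVal n N z j ∧ bandVal n N z j < n + N := by
  unfold bandVal
  constructor
  · omega
  · have : ((z.sort (· ≤ ·)).map Fin.val).getD j 0 < 2*N := by
      by_cases hj : j < ((z.sort (· ≤ ·)).map Fin.val).length
      · rw [List.getD_eq_getElem _ _ hj]
        have hmem : ((z.sort (· ≤ ·)).map Fin.val)[j] ∈ (z.sort (· ≤ ·)).map Fin.val :=
          List.getElem_mem _
        obtain ⟨v, _, hv⟩ := List.mem_map.1 hmem
        rw [← hv]
        exact v.isLt
      · rw [List.getD_eq_default _ _ (by omega)]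
        omega
    omega

lemma bandVal_getD {n N : ℕ} (z : Finset (Fin (2*N))) {j : ℕ} (hj : j < z.card) (d : Fin (2*N)) :
    bandVal n N z j = ((z.sort (· ≤ ·)).getD j d).val + (n - N) := by
  unfold bandVal
  have hj' : j < (z.sort (· ≤ ·)).length := by rwa [Finset.length_sort]
  rw [List.getD_eq_getElem _ _ (by simpa using hj'), List.getD_eq_getElem _ _ hj']
  simp


/-! ### Correctness of the encoded input: injectivity and the median value -/

lemma encoding_main {n N : ℕ} (hne : Even n) (hNe : Even N) (hN2 : 2 ≤ N) (h4N : 4*N ≤ n)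
    {PA PB : Finset (Fin n)} (hdAB : Disjoint PA PB)
    (hcPA : PA.card = N/2) (hcPB : PB.card = N/2)
    {x y : Finset (Fin (2*N))} (hx : x.card = N/2) (hy : y.card = N/2) (hxy : Disjoint x y)
    (inp : Fin n → Fin (2*n)) (hinp : ∀ p, (inp p).val = encInNat n N PA PB x y p) :
    Function.Injective inp ∧ medianBit n inp = lsbHalfKth N (x ∪ y) := by
  obtain ⟨n2, hn2⟩ := hne
  obtain ⟨M2, hM2⟩ := hNe
  have hN0 : 0 < N := by omega
  have hNn : N ≤ n := by omega
  have hn0 : 0 < n := by omega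
  have hnN2 : (n - N) % 2 = 0 := by omega
  set CP := (Finset.univ \ PA) \ PB with hCPdef
  have hPBsub : PB ⊆ Finset.univ \ PA := by
    intro p hp
    rw [Finset.mem_sdiff]
    exact ⟨Finset.mem_univ _, Finset.disjoint_right.1 hdAB hp⟩
  have hCPcard : CP.card = n - N := by
    rw [hCPdef, Finset.card_sdiff_of_subset hPBsub, Finset.card_sdiff_of_subset (Finset.subset_univ _)]
    rw [hcPA, hcPB, Finset.card_univ, Fintype.card_fin]
    omega
  have hxycard : (x ∪ y).card = N := by
    rw [Finset.card_union_of_disjoint hxy, hx, hy]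
    omega
  have d0 : Fin (2*N) := ⟨0, by omega⟩
  -- value characterizations
  have hencA : ∀ p ∈ PA, encInNat n N PA PB x y p =
      ((x.sort (· ≤ ·)).getD ((PA.sort (· ≤ ·)).idxOf p) d0).val + (n - N) ∧
      (PA.sort (· ≤ ·)).idxOf p < x.card := by
    intro p hp
    have hidx : (PA.sort (· ≤ ·)).idxOf p < x.card := by
      have := sort_indexOf_lt hp
      omega
    constructor
    · unfold encInNat
      rw [if_pos hp]
      exact bandVal_getD x hidx d0
    · exact hidx
  have hencB : ∀ p ∈ PB, encInNat n N PA PB x y p =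
      ((y.sort (· ≤ ·)).getD ((PB.sort (· ≤ ·)).idxOf p) d0).val + (n - N) ∧
      (PB.sort (· ≤ ·)).idxOf p < y.card := by
    intro p hp
    have hpA : p ∉ PA := Finset.disjoint_right.1 hdAB hp
    have hidx : (PB.sort (· ≤ ·)).idxOf p < y.card := by
      have := sort_indexOf_lt hp
      omega
    constructor
    · unfold encInNat
      rw [if_neg hpA, if_pos hp]
      exact bandVal_getD y hidx d0
    · exact hidx
  have hencC : ∀ p : Fin n, p ∉ PA → p ∉ PB → encInNat n N PA PB x y p =
      padVal n N ((CP.sort (· ≤ ·)).idxOf p) ∧ (CP.sort (· ≤ ·)).idxOf p < n - N := by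
    intro p hpA hpB
    have hpC : p ∈ CP := by
      rw [hCPdef, Finset.mem_sdiff, Finset.mem_sdiff]
      exact ⟨⟨Finset.mem_univ _, hpA⟩, hpB⟩
    have hidx : (CP.sort (· ≤ ·)).idxOf p < n - N := by
      have := sort_indexOf_lt hpC
      omega
    constructor
    · unfold encInNat
      rw [if_neg hpA, if_neg hpB]
    · exact hidx
  -- the target sorted list
  set lowL := (List.range ((n-N)/2)).map (· + 1) with hlowdef
  set midL := ((x ∪ y).sort (· ≤ ·)).map (fun v : Fin (2*N) => v.val + (n - N) + 1) with hmiddef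
  set highL := (List.range ((n-N)/2)).map (fun j => n + N + j + 1) with hhighdef
  have hlowlen : lowL.length = (n-N)/2 := by simp [hlowdef]
  have hmidlen : midL.length = N := by
    rw [hmiddef, List.length_map, Finset.length_sort, hxycard]
  have hhighlen : highL.length = (n-N)/2 := by simp [hhighdef]
  have hlowmem : ∀ a ∈ lowL, 1 ≤ a ∧ a ≤ (n-N)/2 := by
    intro a ha
    rw [hlowdef] at ha
    obtain ⟨j, hj, rfl⟩ := List.mem_map.1 ha
    rw [List.mem_range] at hj
    omega
  have hmidmem : ∀ a ∈ midL, n - N + 1 ≤ a ∧ a ≤ n + N := by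
    intro a ha
    rw [hmiddef] at ha
    obtain ⟨v, hv, rfl⟩ := List.mem_map.1 ha
    have := v.isLt
    omega
  have hhighmem : ∀ a ∈ highL, n + N + 1 ≤ a ∧ a ≤ n + N + (n-N)/2 := by
    intro a ha
    rw [hhighdef] at ha
    obtain ⟨j, hj, rfl⟩ := List.mem_map.1 ha
    rw [List.mem_range] at hj
    omega
  set L := lowL ++ (midL ++ highL) with hLdef
  have hLlen : L.length = n := by
    rw [hLdef]
    simp only [List.length_append]
    omega
  -- membership characterization
  have hmem_iff : ∀ a : ℕ,
      a ∈ Finset.univ.image (fun p => encInNat n N PA PB x y p + 1) ↔ a ∈ L := by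
    intro a
    constructor
    · intro ha
      obtain ⟨p, _, rfl⟩ := Finset.mem_image.1 ha
      rw [hLdef]
      by_cases hpA : p ∈ PA
      · obtain ⟨hval, hidx⟩ := hencA p hpA
        rw [hval]
        refine List.mem_append.2 (Or.inr (List.mem_append.2 (Or.inl ?_)))
        rw [hmiddef]
        refine List.mem_map.2 ⟨(x.sort (· ≤ ·)).getD ((PA.sort (· ≤ ·)).idxOf p) d0, ?_, rfl⟩
        rw [Finset.mem_sort]
        exact Finset.mem_union_left _ (sort_getD_mem hidx d0)
      by_cases hpB : p ∈ PB
      · obtain ⟨hval, hidx⟩ := hencB p hpB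
        rw [hval]
        refine List.mem_append.2 (Or.inr (List.mem_append.2 (Or.inl ?_)))
        rw [hmiddef]
        refine List.mem_map.2 ⟨(y.sort (· ≤ ·)).getD ((PB.sort (· ≤ ·)).idxOf p) d0, ?_, rfl⟩
        rw [Finset.mem_sort]
        exact Finset.mem_union_right _ (sort_getD_mem hidx d0)
      · obtain ⟨hval, hidx⟩ := hencC p hpA hpB
        rw [hval]
        unfold padVal
        by_cases hlow : (CP.sort (· ≤ ·)).idxOf p < (n-N)/2
        · rw [if_pos hlow]
          refine List.mem_append.2 (Or.inl ?_)
          rw [hlowdef]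
          exact List.mem_map.2 ⟨_, List.mem_range.2 hlow, rfl⟩
        · rw [if_neg hlow, if_pos hidx]
          refine List.mem_append.2 (Or.inr (List.mem_append.2 (Or.inr ?_)))
          rw [hhighdef]
          refine List.mem_map.2 ⟨(CP.sort (· ≤ ·)).idxOf p - (n-N)/2, List.mem_range.2 (by omega), ?_⟩
          omega
    · intro ha
      rw [hLdef] at ha
      rcases List.mem_append.1 ha with ha | ha'
      · -- low values
        rw [hlowdef] at ha
        obtain ⟨j, hj, rfl⟩ := List.mem_map.1 ha
        rw [List.mem_range] at hj
        have hjC : j < CP.card := by omega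
        set p := (CP.sort (· ≤ ·)).getD j ⟨0, hn0⟩ with hpdef
        have hpC : p ∈ CP := sort_getD_mem hjC _
        have hpA : p ∉ PA := by
          rw [hCPdef, Finset.mem_sdiff, Finset.mem_sdiff] at hpC
          exact hpC.1.2
        have hpB : p ∉ PB := by
          rw [hCPdef, Finset.mem_sdiff] at hpC
          exact hpC.2
        refine Finset.mem_image.2 ⟨p, Finset.mem_univ _, ?_⟩
        obtain ⟨hval, _⟩ := hencC p hpA hpB
        rw [hval, hpdef, sort_indexOf_getD hjC]
        unfold padVal
        rw [if_pos hj]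
      rcases List.mem_append.1 ha' with ha | ha
      · -- band values
        rw [hmiddef] at ha
        obtain ⟨v, hv, rfl⟩ := List.mem_map.1 ha
        rw [Finset.mem_sort, Finset.mem_union] at hv
        rcases hv with hv | hv
        · have hjx : (x.sort (· ≤ ·)).idxOf v < x.card := sort_indexOf_lt hv
          have hjA : (x.sort (· ≤ ·)).idxOf v < PA.card := by omega
          set p := (PA.sort (· ≤ ·)).getD ((x.sort (· ≤ ·)).idxOf v) ⟨0, hn0⟩ with hpdef
          have hpA : p ∈ PA := sort_getD_mem hjA _
          refine Finset.mem_image.2 ⟨p, Finset.mem_univ _, ?_⟩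
          obtain ⟨hval, _⟩ := hencA p hpA
          rw [hval, hpdef, sort_indexOf_getD hjA, sort_getD_indexOf hv]
        · have hjy : (y.sort (· ≤ ·)).idxOf v < y.card := sort_indexOf_lt hv
          have hjB : (y.sort (· ≤ ·)).idxOf v < PB.card := by omega
          set p := (PB.sort (· ≤ ·)).getD ((y.sort (· ≤ ·)).idxOf v) ⟨0, hn0⟩ with hpdef
          have hpB : p ∈ PB := sort_getD_mem hjB _
          refine Finset.mem_image.2 ⟨p, Finset.mem_univ _, ?_⟩
          obtain ⟨hval, _⟩ := hencB p hpB
          rw [hval, hpdef, sort_indexOf_getD hjB, sort_getD_indexOf hv]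
      · -- high values
        rw [hhighdef] at ha
        obtain ⟨j, hj, rfl⟩ := List.mem_map.1 ha
        rw [List.mem_range] at hj
        have hjC : (n-N)/2 + j < CP.card := by omega
        set p := (CP.sort (· ≤ ·)).getD ((n-N)/2 + j) ⟨0, hn0⟩ with hpdef
        have hpC : p ∈ CP := sort_getD_mem hjC _
        have hpA : p ∉ PA := by
          rw [hCPdef, Finset.mem_sdiff, Finset.mem_sdiff] at hpC
          exact hpC.1.2
        have hpB : p ∉ PB := by
          rw [hCPdef, Finset.mem_sdiff] at hpC
          exact hpC.2
        refine Finset.mem_image.2 ⟨p, Finset.mem_univ _, ?_⟩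
        obtain ⟨hval, _⟩ := hencC p hpA hpB
        rw [hval, hpdef, sort_indexOf_getD hjC]
        unfold padVal
        rw [if_neg (by omega), if_pos (by omega)]
        omega
  -- nodup
  have hlownd : lowL.Nodup :=
    List.Nodup.map (fun a b hab => by omega) List.nodup_range
  have hmidnd : midL.Nodup := by
    refine List.Nodup.map ?_ (Finset.sort_nodup _ _)
    intro a b hab
    dsimp only at hab
    exact Fin.val_injective (by omega)
  have hhighnd : highL.Nodup :=
    List.Nodup.map (fun a b hab => by omega) List.nodup_range
  have hLnd : L.Nodup := by
    rw [hLdef]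
    refine List.Nodup.append hlownd (List.Nodup.append hmidnd hhighnd ?_) ?_
    · intro a ha hb
      have := hmidmem a ha
      have := hhighmem a hb
      omega
    · intro a ha hb
      have h1 := hlowmem a ha
      rcases List.mem_append.1 hb with hb | hb
      · have := hmidmem a hb
        omega
      · have := hhighmem a hb
        omega
  -- sorted
  have hLsorted : L.Pairwise (· ≤ ·) := by
    rw [hLdef]
    show List.Pairwise (· ≤ ·) _
    rw [List.pairwise_append]
    refine ⟨?_, ?_, ?_⟩
    · exact List.Pairwise.map _ (fun a b hab => by omega) List.pairwise_le_range
    · rw [List.pairwise_append]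
      refine ⟨?_, ?_, ?_⟩
      · refine List.Pairwise.map _ (fun a b hab => ?_) (Finset.pairwise_sort _ _)
        have : a.val ≤ b.val := hab
        omega
      · exact List.Pairwise.map _ (fun a b hab => by omega) List.pairwise_le_range
      · intro a ha b hb
        have := hmidmem a ha
        have := hhighmem b hb
        omega
    · intro a ha b hb
      have h1 := hlowmem a ha
      rcases List.mem_append.1 hb with hb | hb
      · have := hmidmem b hb
        omega
      · have := hhighmem b hb
        omega
  -- the sorted image equals L
  have himg_eq :
      (Finset.univ.image (fun p => encInNat n N PA PB x y p + 1)).sort (· ≤ ·) = L := by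
    apply List.Perm.eq_of_pairwise' (Finset.pairwise_sort _ _) hLsorted
    apply List.perm_of_nodup_nodup_toFinset_eq (Finset.sort_nodup _ _) hLnd
    ext a
    rw [List.mem_toFinset, List.mem_toFinset, Finset.mem_sort]
    exact hmem_iff a
  -- injectivity
  have hcardimg : (Finset.univ.image (fun p => encInNat n N PA PB x y p + 1)).card = n := by
    have h1 : ((Finset.univ.image (fun p => encInNat n N PA PB x y p + 1)).sort (· ≤ ·)).length
        = n := by rw [himg_eq, hLlen]
    rwa [Finset.length_sort] at h1
  have hinj : Function.Injective inp := by
    have hinjon : Set.InjOn (fun p => encInNat n N PA PB x y p + 1)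
        ↑(Finset.univ : Finset (Fin n)) := by
      apply Finset.injOn_of_card_image_eq
      rw [hcardimg, Finset.card_univ, Fintype.card_fin]
    intro p₁ p₂ h
    have hv : encInNat n N PA PB x y p₁ + 1 = encInNat n N PA PB x y p₂ + 1 := by
      have := congrArg Fin.val h
      rw [hinp, hinp] at this
      omega
    exact hinjon (Finset.mem_coe.2 (Finset.mem_univ _)) (Finset.mem_coe.2 (Finset.mem_univ _)) hv
  refine ⟨hinj, ?_⟩
  -- median computation
  have hconv : ∀ l : List (Fin (2*N)), (l.map (fun a => (a : ℕ) + 1) : List ℕ) =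
      l.map (fun v : Fin (2*N) => v.val + 1) := by
    intro l
    induction l with
    | nil => rfl
    | cons hd tl ih =>
      show _ :: _ = _ :: _
      rw [← ih]
      rfl
  have hlen : N/2 - 1 < ((x ∪ y).sort (· ≤ ·)).length := by
    rw [Finset.length_sort, hxycard]; omega
  have hmid_getD : midL.getD (N/2 - 1) 0 =
      (((x ∪ y).sort (· ≤ ·)).getD (N/2 - 1) d0).val + (n - N) + 1 := by
    rw [hmiddef]
    rw [List.getD_eq_getElem _ _ (by simpa using hlen), List.getD_eq_getElem _ _ hlen]
    simp
  have hlsb_getD : (((x ∪ y).sort (· ≤ ·)).map (fun v : Fin (2*N) => v.val + 1)).getD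
      (N/2 - 1) 0 = (((x ∪ y).sort (· ≤ ·)).getD (N/2 - 1) d0).val + 1 := by
    rw [List.getD_eq_getElem _ _ (by simpa using hlen), List.getD_eq_getElem _ _ hlen]
    simp
  unfold medianBit lsbHalfKth
  have himg_eq2 : (Finset.univ.image fun i => ((inp i : ℕ) + 1)) =
      Finset.univ.image (fun p => encInNat n N PA PB x y p + 1) := by
    apply Finset.image_congr
    intro p _
    dsimp only
    rw [hinp]
  rw [himg_eq2, himg_eq, hLdef]
  have hidx1 : n / 2 - 1 ≥ lowL.length := by
    rw [hlowlen]; omega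
  rw [List.getD_append_right _ _ _ _ hidx1]
  have hidx2 : n / 2 - 1 - lowL.length < midL.length := by
    rw [hlowlen, hmidlen]; omega
  rw [List.getD_append _ _ _ _ hidx2]
  have hidx3 : n / 2 - 1 - lowL.length = N / 2 - 1 := by
    rw [hlowlen]; omega
  rw [hidx3, hconv ((x ∪ y).sort (· ≤ ·)), hmid_getD, hlsb_getD]
  exact decide_eq_decide.2 (by omega)




lemma natFold_eq_foldl_range {Q : Type*} (g : ℕ → Q → Q) :
    ∀ (len : ℕ) (st : Q), natFold g 0 len st = List.foldl (fun st i => g i st) st (List.range len) := by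
  intro len
  induction len with
  | zero => intro st; rfl
  | succ l ih =>
    intro st
    rw [natFold_add g l 1 0 st, List.range_succ, List.foldl_append, ← ih st, Nat.zero_add]
    rfl

def OPstepAt {n T S : ℕ} (P : ObliviousProgram n T S) (v : Fin n → Fin (2*n)) (i : ℕ)
    (st : P.Q) : P.Q :=
  if h : i < T then P.step ⟨i, h⟩ st (v (P.query ⟨i, h⟩)) else st

lemma run_eq_natFold {n T S : ℕ} (P : ObliviousProgram n T S) (v : Fin n → Fin (2*n)) :
    P.run v = P.out (natFold (OPstepAt P v) 0 T P.start) := by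
  unfold ObliviousProgram.run
  congr 1
  rw [natFold_eq_foldl_range, ← (show (List.finRange T).map Fin.val = List.range T from
    List.ext_getElem (by simp) (by simp)), List.foldl_map]
  congr 1
  funext st i
  unfold OPstepAt
  rw [dif_pos i.isLt]

lemma encInNat_lt {n N : ℕ} (hN0 : 0 < N) (hNn : N < n) (hpar : (n - N) % 2 = 0)
    (PA PB : Finset (Fin n)) (x y : Finset (Fin (2*N))) (p : Fin n) :
    encInNat n N PA PB x y p < 2*n := by
  unfold encInNat
  have hb1 := bandVal_in_range (n := n) hN0 (le_of_lt hNn) x ((PA.sort (· ≤ ·)).idxOf p)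
  have hb2 := bandVal_in_range (n := n) hN0 (le_of_lt hNn) y ((PB.sort (· ≤ ·)).idxOf p)
  split_ifs with h1 h2
  · omega
  · omega
  · unfold padVal
    split_ifs <;> omega

lemma encInNat_agreeA {n N : ℕ} {PA PB : Finset (Fin n)} (x y y' : Finset (Fin (2*N)))
    {p : Fin n} (hp : p ∉ PB) :
    encInNat n N PA PB x y' p = encInNat n N PA PB x y p := by
  unfold encInNat
  by_cases hpA : p ∈ PA
  · rw [if_pos hpA, if_pos hpA]
  · rw [if_neg hpA, if_neg hpA, if_neg hp, if_neg hp]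

lemma encInNat_agreeB {n N : ℕ} {PA PB : Finset (Fin n)} (x x' y : Finset (Fin (2*N)))
    {p : Fin n} (hp : p ∉ PA) :
    encInNat n N PA PB x' y p = encInNat n N PA PB x y p := by
  unfold encInNat
  rw [if_neg hp, if_neg hp]




end OblAux


/-- From an oblivious program with time `T ≤ k·n` and space `S` computing `MedianBit`,
one gets, for every even `2 ≤ N ≤ n / C(4k²,2k)`, a deterministic two-party protocol with
at most `4k+1` messages of at most `S` bits each that computes the least significant bit of
the `N/2`-th smallest element of the union of the players' disjoint `N/2`-element subsets
of `{1,…,2N}`. -/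

theorem oblivious_to_protocol (n k S T : ℕ) (hn : Even n) (hk : 1 ≤ k) (hT : T ≤ k * n)
    (P : ObliviousProgram n T S) (hP : P.ComputesMedianBit)
    (N : ℕ) (hN : Even N) (hN2 : 2 ≤ N)
    (hNn : (N : ℝ) ≤ (n : ℝ) / (Nat.choose (4 * k ^ 2) (2 * k) : ℝ)) :
    ∃ (t : ℕ) (m : Fin t → ℕ) (af : Bool)
      (Pr : Protocol (Finset (Fin (2 * N))) (Finset (Fin (2 * N))) t m af),
      t ≤ 4 * k + 1 ∧ (∀ i, m i ≤ S) ∧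
      ∀ x y : Finset (Fin (2 * N)), x.card = N / 2 → y.card = N / 2 → Disjoint x y →
        Pr.run x y = lsbHalfKth N (x ∪ y) := by
  classical
  -- numeric facts
  have hCpos : 0 < Nat.choose (4 * k ^ 2) (2 * k) :=
    Nat.choose_pos (by nlinarith)
  have hCn : N * Nat.choose (4 * k ^ 2) (2 * k) ≤ n := by
    have hCposR : (0:ℝ) < (Nat.choose (4 * k ^ 2) (2 * k) : ℝ) := by exact_mod_cast hCpos
    have := (le_div_iff₀ hCposR).1 hNn
    exact_mod_cast this
  have hCpow : 2^(4*k-2) ≤ Nat.choose (4*k^2) (2*k) := OblAux.choose_lower k hk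
  have h4pow : 4 ≤ 2^(4*k-2) := by
    calc (4:ℕ) = 2^2 := by norm_num
      _ ≤ 2^(4*k-2) := Nat.pow_le_pow_right (by omega) (by omega)
  have h4N : 4*N ≤ n := by
    calc 4*N = N*4 := by ring
      _ ≤ N * 2^(4*k-2) := Nat.mul_le_mul_left _ h4pow
      _ ≤ N * Nat.choose (4*k^2) (2*k) := Nat.mul_le_mul_left _ hCpow
      _ ≤ n := hCn
  have hn0 : 0 < n := by omega
  have hN0 : 0 < N := by omega
  have hNltn : N < n := by omega
  have hparNn : (n - N) % 2 = 0 := by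
    obtain ⟨a, ha⟩ := hn
    obtain ⟨b, hb⟩ := hN
    omega
  -- the extended query sequence
  set q' : ℕ → Fin n := fun i => if h : i < T then P.query ⟨i, h⟩ else ⟨0, hn0⟩ with hq'def
  obtain ⟨PA, PB, c, hdisj, hcPA, hcPB, hc0, hcT, hcmono, havoid⟩ :=
    OblAux.phase1 q' k T N hk hT hN2 hN hCn
  -- state embedding
  letI : Fintype P.Q := P.fintypeQ
  have hcard : Fintype.card P.Q ≤ Fintype.card (Fin (2^S)) := by
    simpa using P.card_le
  obtain ⟨e⟩ : Nonempty (P.Q ↪ Fin (2^S)) :=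
    Function.Embedding.nonempty_iff_card_le.2 hcard
  set dec : Fin (2^S) → P.Q := @Function.invFun _ _ ⟨P.start⟩ e with hdecdef
  have hdec : ∀ z, dec (e z) = z := fun z =>
    @Function.leftInverse_invFun _ _ ⟨P.start⟩ _ e.injective z
  -- encoded inputs
  have henclt : ∀ (xx yy : Finset (Fin (2*N))) (p : Fin n),
      OblAux.encInNat n N PA PB xx yy p < 2*n :=
    fun xx yy p => OblAux.encInNat_lt hN0 hNltn hparNn PA PB xx yy p
  set Pr : Protocol (Finset (Fin (2 * N))) (Finset (Fin (2 * N))) (4*k+1)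
      (fun _ => S) true :=
    { msgA := fun i xx prev => e (OblAux.natFold (OblAux.OPstepAt P
        (fun p => ⟨OblAux.encInNat n N PA PB xx ∅ p, henclt xx ∅ p⟩))
        (c i.val) (c (i.val+1) - c i.val)
        (if h0 : i.val = 0 then P.start
         else dec (prev ⟨i.val - 1, by have := i.isLt; omega⟩
           (by simp only [Fin.lt_def]; omega))))
      msgB := fun i yy prev => e (OblAux.natFold (OblAux.OPstepAt P
        (fun p => ⟨OblAux.encInNat n N PA PB ∅ yy p, henclt ∅ yy p⟩))
        (c i.val) (c (i.val+1) - c i.val)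
        (if h0 : i.val = 0 then P.start
         else dec (prev ⟨i.val - 1, by have := i.isLt; omega⟩
           (by simp only [Fin.lt_def]; omega))))
      outA := fun xx tr => P.out (dec (tr ⟨4*k, by omega⟩))
      outB := fun yy tr => P.out (dec (tr ⟨4*k, by omega⟩)) } with hPrdef
  refine ⟨4*k+1, fun _ => S, true, Pr, le_refl _, fun _ => le_refl _, ?_⟩
  intro x y hx hy hxy
  set inp : Fin n → Fin (2*n) :=
    fun p => ⟨OblAux.encInNat n N PA PB x y p, henclt x y p⟩ with hinpdef
  have hinpval : ∀ p, (inp p).val = OblAux.encInNat n N PA PB x y p := fun p => rfl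
  obtain ⟨hinj, hmed⟩ :=
    OblAux.encoding_main hn hN hN2 h4N hdisj hcPA hcPB hx hy hxy inp hinpval
  set TS : ℕ → P.Q := fun ℓ => OblAux.natFold (OblAux.OPstepAt P inp) 0 ℓ P.start with hTSdef
  -- simulating an interval
  have hsim : ∀ (ℓ : ℕ), ℓ < 4*k+1 → ∀ (v : Fin n → Fin (2*n)),
      (∀ i : ℕ, c ℓ ≤ i → i < c (ℓ+1) → ∀ st,
        OblAux.OPstepAt P v i st = OblAux.OPstepAt P inp i st) →
      OblAux.natFold (OblAux.OPstepAt P v) (c ℓ) (c (ℓ+1) - c ℓ) (TS (c ℓ)) = TS (c (ℓ+1)) := by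
    intro ℓ hℓ v hv
    have hlen : c ℓ + (c (ℓ+1) - c ℓ) = c (ℓ+1) := by have := hcmono ℓ; omega
    rw [OblAux.natFold_congr _ _ _ (fun i h1 h2 st => hv i h1 (by omega) st)]
    calc OblAux.natFold (OblAux.OPstepAt P inp) (c ℓ) (c (ℓ+1) - c ℓ) (TS (c ℓ))
        = OblAux.natFold (OblAux.OPstepAt P inp) (0 + c ℓ) (c (ℓ+1) - c ℓ)
            (OblAux.natFold (OblAux.OPstepAt P inp) 0 (c ℓ) P.start) := by rw [Nat.zero_add]
      _ = OblAux.natFold (OblAux.OPstepAt P inp) 0 (c ℓ + (c (ℓ+1) - c ℓ)) P.start :=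
            (OblAux.natFold_add _ _ _ _ _).symm
      _ = TS (c (ℓ+1)) := by rw [hlen]
  -- value agreement on the two kinds of intervals
  have hstepA : ∀ (ℓ : ℕ), ℓ < 4*k+1 → ℓ % 2 = 0 → ∀ i, c ℓ ≤ i → i < c (ℓ+1) → ∀ st,
      OblAux.OPstepAt P (fun p => (⟨OblAux.encInNat n N PA PB x ∅ p, henclt x ∅ p⟩ : Fin (2*n)))
        i st = OblAux.OPstepAt P inp i st := by
    intro ℓ hℓ hpar2 i h1 h2 st
    unfold OblAux.OPstepAt
    split_ifs with hiT
    · have hq : q' i = P.query ⟨i, hiT⟩ := by rw [hq'def]; dsimp only; rw [dif_pos hiT]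
      have havd := havoid ℓ i hℓ h1 h2
      rw [if_pos hpar2, hq] at havd
      congr 1
      apply Fin.ext
      show OblAux.encInNat n N PA PB x ∅ (P.query ⟨i, hiT⟩)
        = OblAux.encInNat n N PA PB x y (P.query ⟨i, hiT⟩)
      exact OblAux.encInNat_agreeA x y ∅ havd
    · rfl
  have hstepB : ∀ (ℓ : ℕ), ℓ < 4*k+1 → ℓ % 2 = 1 → ∀ i, c ℓ ≤ i → i < c (ℓ+1) → ∀ st,
      OblAux.OPstepAt P (fun p => (⟨OblAux.encInNat n N PA PB ∅ y p, henclt ∅ y p⟩ : Fin (2*n)))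
        i st = OblAux.OPstepAt P inp i st := by
    intro ℓ hℓ hpar2 i h1 h2 st
    unfold OblAux.OPstepAt
    split_ifs with hiT
    · have hq : q' i = P.query ⟨i, hiT⟩ := by rw [hq'def]; dsimp only; rw [dif_pos hiT]
      have havd := havoid ℓ i hℓ h1 h2
      rw [if_neg (by omega), hq] at havd
      congr 1
      apply Fin.ext
      show OblAux.encInNat n N PA PB ∅ y (P.query ⟨i, hiT⟩)
        = OblAux.encInNat n N PA PB x y (P.query ⟨i, hiT⟩)
      exact OblAux.encInNat_agreeB x ∅ y havd
    · rfl
  -- transcript correctness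
  have hCT : ∀ (ℓ : ℕ), ∀ (hℓ : ℓ < 4*k+1),
      Pr.transcript x y ⟨ℓ, hℓ⟩ = e (TS (c (ℓ+1))) := by
    intro ℓ
    induction ℓ using Nat.strong_induction_on with
    | _ ℓ IH =>
      intro hℓ
      rw [Protocol.transcript]
      have hprev : (if h0 : ℓ = 0 then P.start
          else dec ((fun (j : Fin (4*k+1)) (hj : j < (⟨ℓ, hℓ⟩ : Fin (4*k+1))) =>
            Pr.transcript x y j) ⟨ℓ - 1, by omega⟩
            (by simp only [Fin.lt_def]; omega))) = TS (c ℓ) := by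
        by_cases h0 : ℓ = 0
        · rw [dif_pos h0, h0, hc0]
          rfl
        · rw [dif_neg h0]
          have hIH := IH (ℓ - 1) (by omega) (by omega)
          have hl1 : ℓ - 1 + 1 = ℓ := by omega
          rw [hl1] at hIH
          dsimp only
          rw [hIH, hdec]
      rcases Nat.mod_two_eq_zero_or_one ℓ with hpar2 | hpar2
      · have hsend : sendsAlice true ℓ = true := by
          simp [sendsAlice, hpar2]
        rw [hsend, if_pos rfl]
        show e (OblAux.natFold _ (c ℓ) (c (ℓ+1) - c ℓ) _) = _
        congr 1
        rw [hprev]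
        exact hsim ℓ hℓ _ (hstepA ℓ hℓ hpar2)
      · have hsend : sendsAlice true ℓ = false := by
          simp [sendsAlice, hpar2]
        rw [hsend]
        rw [if_neg (by simp)]
        show e (OblAux.natFold _ (c ℓ) (c (ℓ+1) - c ℓ) _) = _
        congr 1
        rw [hprev]
        exact hsim ℓ hℓ _ (hstepB ℓ hℓ hpar2)
  -- final output
  unfold Protocol.run
  have hsend : sendsAlice true (4*k+1-1) = true := by
    unfold sendsAlice
    rw [show 4*k+1-1 = 4*k from by omega, show (4*k) % 2 = 0 from by omega]
    rfl
  rw [hsend, if_pos rfl]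
  show P.out (dec (Pr.transcript x y ⟨4*k, by omega⟩)) = _
  rw [hCT (4*k) (by omega), hdec]
  have hcT' : c (4*k+1) = T := hcT
  rw [show 4*k+1 = 4*k+1 from rfl, hcT']
  have hrun : P.run inp = P.out (TS T) := by
    rw [OblAux.run_eq_natFold]
  rw [← hrun, hP inp hinj, hmed]
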